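/- arXiv:1405.5605 — 6 statements merged into one kernel-verified Lean document; each statement's English description precedes it below -/
import Mathlib

section
/- For every natural number n, the limit σ(n) := lim_{N→∞} (1/N) Σ_{i=0}^{N-1} (-1)^{t[i]+t[i+n]} exists, where t is the Thue–Morse sequence. -/
/-- The Thue–Morse sequence: parity of the number of 1s in binary representation. -/
def t (n : ℕ) : ℕ := (Nat.digits 2 n).count 1 % 2

lemma t_even (i : ℕ) : t (2*i) = t i := by
  rcases Nat.eq_zero_or_pos i with rfl | hi
  · rfl
  · unfold t
    rw [Nat.digits_def' (by norm_num : 1 < 2) (by omega : 0 < 2*i)]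
    simp [Nat.mul_div_cancel_left _ (by norm_num : 0 < 2), Nat.mul_mod_right]

lemma t_odd (i : ℕ) : t (2*i+1) = (t i + 1) % 2 := by
  unfold t
  rw [Nat.digits_def' (by norm_num : 1 < 2) (by omega : 0 < 2*i+1)]
  have h1 : (2*i+1) % 2 = 1 := by omega
  have h2 : (2*i+1) / 2 = i := by omega
  rw [h1, h2]
  simp [List.count_cons]

lemma t_zero_or_one (i : ℕ) : t i = 0 ∨ t i = 1 := Nat.mod_two_eq_zero_or_one _

noncomputable def s (i : ℕ) : ℝ := (-1) ^ (t i)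

lemma s_even (i : ℕ) : s (2*i) = s i := by unfold s; rw [t_even]

lemma s_odd (i : ℕ) : s (2*i+1) = -s i := by
  unfold s
  rw [t_odd]
  rcases t_zero_or_one i with h | h <;> simp [h]

lemma s_sq (i : ℕ) : s i * s i = 1 := by
  unfold s
  rcases t_zero_or_one i with h | h <;> simp [h]

noncomputable def cor (n i : ℕ) : ℝ := (-1) ^ (t i + t (i + n))

lemma cor_eq (n i : ℕ) : cor n i = s i * s (i + n) := by
  unfold cor s; rw [pow_add]

lemma abs_cor (n i : ℕ) : |cor n i| ≤ 1 := by
  unfold cor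
  rw [abs_pow, abs_neg, abs_one, one_pow]

noncomputable def Sm (n N : ℕ) : ℝ := ∑ i ∈ Finset.range N, cor n i

lemma Sm_succ (n N : ℕ) : Sm n (N+1) = Sm n N + cor n N := Finset.sum_range_succ _ _

lemma sum_double (g : ℕ → ℝ) (N : ℕ) :
    ∑ i ∈ Finset.range (2*N), g i = ∑ j ∈ Finset.range N, (g (2*j) + g (2*j+1)) := by
  induction N with
  | zero => simp
  | succ N ih =>
    rw [show 2*(N+1) = (2*N+1)+1 by ring, Finset.sum_range_succ, Finset.sum_range_succ,
      Finset.sum_range_succ, ih]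
    ring

lemma abs_Sm (n N : ℕ) : |Sm n N| ≤ N := by
  calc |Sm n N| ≤ ∑ i ∈ Finset.range N, |cor n i| := Finset.abs_sum_le_sum_abs _ _
  _ ≤ ∑ i ∈ Finset.range N, 1 := Finset.sum_le_sum fun i _ => abs_cor n i
  _ = N := by simp

lemma Sm_zero (N : ℕ) : Sm 0 N = N := by
  unfold Sm
  have : ∀ i, cor 0 i = 1 := fun i => by rw [cor_eq, Nat.add_zero, s_sq]
  simp [this]

lemma Sm_even (m N : ℕ) : Sm (2*m) (2*N) = 2 * Sm m N := by
  unfold Sm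
  rw [sum_double]
  rw [Finset.mul_sum]
  apply Finset.sum_congr rfl
  intro j _
  rw [cor_eq, cor_eq, cor_eq, show 2*j + 2*m = 2*(j+m) by ring,
    show 2*j+1 + 2*m = 2*(j+m)+1 by ring, s_even, s_even, s_odd, s_odd]
  ring

lemma Sm_odd (m N : ℕ) : Sm (2*m+1) (2*N) = -(Sm m N + Sm (m+1) N) := by
  unfold Sm
  rw [sum_double, ← Finset.sum_add_distrib, ← Finset.sum_neg_distrib]
  apply Finset.sum_congr rfl
  intro j _
  rw [cor_eq, cor_eq, cor_eq, cor_eq, show 2*j + (2*m+1) = 2*(j+m)+1 by ring,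
    show 2*j+1 + (2*m+1) = 2*(j+(m+1)) by ring, s_even, s_even, s_odd, s_odd]
  ring

lemma cor_one_even (K : ℕ) : cor 1 (2*K) = -1 := by
  rw [cor_eq, s_even, s_odd]
  nlinarith [s_sq K]

lemma E_rec (M : ℕ) (hM : 1 ≤ M) :
    |Sm 1 M + M/3| ≤ |Sm 1 (M/2) + (M/2 : ℕ)/3| + 2/3 := by
  set K := M/2 with hK
  have h2 : M = 2*K ∨ M = 2*K+1 := by omega
  have hbase : Sm 1 (2*K) = -(K + Sm 1 K) := by
    have := Sm_odd 0 K
    rw [Sm_zero] at this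
    simpa using this
  rcases h2 with h | h
  · rw [h, hbase]
    have hc : ((2*K : ℕ) : ℝ) = 2*(K:ℝ) := by push_cast; ring
    rw [hc]
    have : -((K:ℝ) + Sm 1 K) + 2*(K:ℝ)/3 = -(Sm 1 K + (K:ℝ)/3) := by ring
    rw [this, abs_neg]
    linarith [abs_nonneg (Sm 1 K + (K:ℝ)/3)]
  · rw [h, show 2*K+1 = (2*K)+1 from rfl, Sm_succ, hbase, cor_one_even]
    have hc : ((2*K+1 : ℕ) : ℝ) = 2*(K:ℝ)+1 := by push_cast; ring
    rw [hc]
    have : -((K:ℝ) + Sm 1 K) + -1 + (2*(K:ℝ)+1)/3 = -(Sm 1 K + (K:ℝ)/3) + (-2/3) := by ring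
    rw [this]
    calc |-(Sm 1 K + (K:ℝ)/3) + (-2/3)| ≤ |-(Sm 1 K + (K:ℝ)/3)| + |(-2/3 : ℝ)| := abs_add_le _ _
    _ = |Sm 1 K + (K:ℝ)/3| + 2/3 := by rw [abs_neg]; norm_num

lemma key_one : ∀ ε : ℝ, 0 < ε → ∃ C : ℝ, ∀ N : ℕ, |Sm 1 N - (-1/3) * N| ≤ ε * N + C := by
  intro ε hε
  obtain ⟨M0, hM0⟩ := exists_nat_ge (4/(3*ε))
  refine ⟨(4/3)*(M0+1), ?_⟩
  have hM0' : 4/3 ≤ ε * (M0+1) := by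
    rw [div_le_iff₀ (by positivity) ] at hM0
    nlinarith
  have main : ∀ N : ℕ, |Sm 1 N + (N:ℝ)/3| ≤ ε * N + (4/3)*(M0+1) := by
    intro N
    induction N using Nat.strong_induction_on with
    | _ N ih =>
      rcases lt_or_ge N (M0+1) with hN | hN
      · have h1 : |Sm 1 N + (N:ℝ)/3| ≤ (N:ℝ) + (N:ℝ)/3 := by
          calc |Sm 1 N + (N:ℝ)/3| ≤ |Sm 1 N| + |(N:ℝ)/3| := abs_add_le _ _
          _ ≤ (N:ℝ) + (N:ℝ)/3 := by
              have := abs_Sm 1 N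
              have : |(N:ℝ)/3| = (N:ℝ)/3 := abs_of_nonneg (by positivity)
              linarith [abs_Sm 1 N]
        have hNc : (N:ℝ) ≤ M0 + 1 := by
          have : (N:ℝ) < ((M0+1 : ℕ) : ℝ) := by exact_mod_cast hN
          push_cast at this; linarith
        have hε0 : 0 ≤ ε * N := by positivity
        nlinarith
      · have h1 : 1 ≤ N := by omega
        have hlt : N/2 < N := by omega
        have ihK := ih (N/2) hlt
        have hrec := E_rec N h1
        have hcast : ((N/2 : ℕ) : ℝ) ≤ (N:ℝ)/2 := by
          have : 2*(N/2) ≤ N := by omega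
          have := (Nat.cast_le (α := ℝ)).2 this
          push_cast at this; linarith
        have hNge : ((M0:ℝ)+1) ≤ (N:ℝ) := by
          have := (Nat.cast_le (α := ℝ)).2 hN
          push_cast at this; linarith
        have hgap : 2/3 ≤ ε * ((N:ℝ) - (N/2 : ℕ)) := by
          have h1 : (N:ℝ) - ((N/2:ℕ):ℝ) ≥ (N:ℝ)/2 := by linarith
          have h2 : ε * ((N:ℝ)/2) ≥ 2/3 := by nlinarith
          nlinarith
        have : ε * ((N/2:ℕ):ℝ) + 2/3 ≤ ε * N := by nlinarith
        linarith
  intro N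
  have : Sm 1 N - (-1/3) * N = Sm 1 N + (N:ℝ)/3 := by ring
  rw [this]
  exact main N

lemma key (n : ℕ) : ∃ L : ℝ, ∀ ε : ℝ, 0 < ε → ∃ C : ℝ, ∀ N : ℕ, |Sm n N - L * N| ≤ ε * N + C := by
  induction n using Nat.strong_induction_on with
  | _ n ih =>
    match n, ih with
    | 0, _ =>
      refine ⟨1, fun ε hε => ⟨0, fun N => ?_⟩⟩
      rw [Sm_zero]
      simp
      positivity
    | 1, _ => exact ⟨-1/3, key_one⟩
    | (k+2), ih =>
      rcases Nat.even_or_odd (k+2) with ⟨m, hm⟩ | ⟨m, hm⟩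
      · -- even: k+2 = 2*m, m ≥ 1
        have hm' : k+2 = 2*m := by omega
        have hmlt : m < k+2 := by omega
        obtain ⟨L, hL⟩ := ih m hmlt
        refine ⟨L, fun ε hε => ?_⟩
        obtain ⟨C, hC⟩ := hL ε hε
        refine ⟨2*C + 1 + |L|, fun M => ?_⟩
        obtain ⟨K, hK⟩ : ∃ K, M = 2*K ∨ M = 2*K+1 := ⟨M/2, by omega⟩
        have habs0 : 0 ≤ |L| := abs_nonneg L
        have hcor : |cor (k+2) (2*K)| ≤ 1 := abs_cor _ _
        have hCK := hC K
        have hεK : 0 ≤ ε * K := by positivity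
        have hbase : |2 * Sm m K - L * (2*(K:ℝ))| ≤ ε * (2*(K:ℝ)) + 2*C := by
          rw [show 2 * Sm m K - L * (2*(K:ℝ)) = 2 * (Sm m K - L * K) by ring, abs_mul]
          rw [abs_of_nonneg (by norm_num : (0:ℝ) ≤ 2)]
          linarith
        rcases hK with rfl | rfl
        · rw [hm', Sm_even]
          push_cast
          have : |2 * Sm m K - L * (2*(K:ℝ))| ≤ ε * (2*(K:ℝ)) + (2*C + 1 + |L|) := by linarith
          convert this using 2 <;> ring
        · rw [show 2*K+1 = (2*K)+1 from rfl, Sm_succ, hm', Sm_even]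
          push_cast
          have h2 : |2 * Sm m K + cor (2*m) (2*K) - L * (2*(K:ℝ)+1)|
              ≤ |2 * Sm m K - L * (2*(K:ℝ))| + |cor (2*m) (2*K)| + |L| := by
            have := abs_add_le (2 * Sm m K - L * (2*(K:ℝ))) (cor (2*m) (2*K) - L)
            have h3 : |cor (2*m) (2*K) - L| ≤ |cor (2*m) (2*K)| + |L| := abs_sub _ _
            calc |2 * Sm m K + cor (2*m) (2*K) - L * (2*(K:ℝ)+1)|
                = |(2 * Sm m K - L * (2*(K:ℝ))) + (cor (2*m) (2*K) - L)| := by ring_nf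
              _ ≤ _ := by linarith
          have hcor' : |cor (2*m) (2*K)| ≤ 1 := abs_cor _ _
          have hfin : |2 * Sm m K + cor (2*m) (2*K) - L * (2*(K:ℝ)+1)|
              ≤ ε * (2*(K:ℝ)+1) + (2*C + 1 + |L|) := by nlinarith
          convert hfin using 2 <;> ring
      · -- odd: k+2 = 2*m+1, m ≥ 1
        have hm' : k+2 = 2*m+1 := hm
        have h1 : m < k+2 := by omega
        have h2 : m+1 < k+2 := by omega
        obtain ⟨L1, hL1⟩ := ih m h1
        obtain ⟨L2, hL2⟩ := ih (m+1) h2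
        set L : ℝ := -(L1+L2)/2 with hLdef
        refine ⟨L, fun ε hε => ?_⟩
        obtain ⟨C1, hC1⟩ := hL1 ε hε
        obtain ⟨C2, hC2⟩ := hL2 ε hε
        refine ⟨C1 + C2 + 1 + |L|, fun M => ?_⟩
        obtain ⟨K, hK⟩ : ∃ K, M = 2*K ∨ M = 2*K+1 := ⟨M/2, by omega⟩
        have habs0 : 0 ≤ |L| := abs_nonneg L
        have hC1K := hC1 K
        have hC2K := hC2 K
        have hεK : 0 ≤ ε * K := by positivity
        have hbase : |-(Sm m K + Sm (m+1) K) - L * (2*(K:ℝ))| ≤ ε * (2*(K:ℝ)) + (C1 + C2) := by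
          have e : -(Sm m K + Sm (m+1) K) - L * (2*(K:ℝ))
              = -((Sm m K - L1 * K) + (Sm (m+1) K - L2 * K)) := by rw [hLdef]; ring
          rw [e, abs_neg]
          calc |(Sm m K - L1 * K) + (Sm (m+1) K - L2 * K)|
              ≤ |Sm m K - L1 * K| + |Sm (m+1) K - L2 * K| := abs_add_le _ _
            _ ≤ ε * (2*(K:ℝ)) + (C1 + C2) := by linarith
        rcases hK with rfl | rfl
        · rw [hm', Sm_odd]
          push_cast
          have : |-(Sm m K + Sm (m+1) K) - L * (2*(K:ℝ))|
              ≤ ε * (2*(K:ℝ)) + (C1 + C2 + 1 + |L|) := by linarith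
          convert this using 2 <;> ring
        · rw [show 2*K+1 = (2*K)+1 from rfl, Sm_succ, hm', Sm_odd]
          push_cast
          have hcor' : |cor (2*m+1) (2*K)| ≤ 1 := abs_cor _ _
          have h3 : |-(Sm m K + Sm (m+1) K) + cor (2*m+1) (2*K) - L * (2*(K:ℝ)+1)|
              ≤ |-(Sm m K + Sm (m+1) K) - L * (2*(K:ℝ))| + |cor (2*m+1) (2*K)| + |L| := by
            have h4 : |cor (2*m+1) (2*K) - L| ≤ |cor (2*m+1) (2*K)| + |L| := abs_sub _ _
            calc |-(Sm m K + Sm (m+1) K) + cor (2*m+1) (2*K) - L * (2*(K:ℝ)+1)|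
                = |(-(Sm m K + Sm (m+1) K) - L * (2*(K:ℝ))) + (cor (2*m+1) (2*K) - L)| := by
                  ring_nf
              _ ≤ _ := by
                  have := abs_add_le (-(Sm m K + Sm (m+1) K) - L * (2*(K:ℝ)))
                    (cor (2*m+1) (2*K) - L)
                  linarith
          have hfin : |-(Sm m K + Sm (m+1) K) + cor (2*m+1) (2*K) - L * (2*(K:ℝ)+1)|
              ≤ ε * (2*(K:ℝ)+1) + (C1 + C2 + 1 + |L|) := by nlinarith
          convert hfin using 2 <;> ring

theorem thue_morse_autocorrelation_exists (n : ℕ) :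
    ∃ L : ℝ, Filter.Tendsto
      (fun N : ℕ => (1 / (N : ℝ)) * ∑ i ∈ Finset.range N, (-1 : ℝ) ^ (t i + t (i + n)))
      Filter.atTop (nhds L) := by
  obtain ⟨L, hL⟩ := key n
  refine ⟨L, ?_⟩
  rw [Metric.tendsto_atTop]
  intro ε hε
  obtain ⟨C, hC⟩ := hL (ε/4) (by positivity)
  obtain ⟨N0, hN0⟩ := exists_nat_gt (max 1 (4*|C|/ε))
  refine ⟨N0, fun N hN => ?_⟩
  have hNR : ((N0:ℝ)) ≤ (N:ℝ) := by exact_mod_cast hN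
  have hN1 : (1:ℝ) < (N:ℝ) := lt_of_lt_of_le (lt_of_le_of_lt (le_max_left _ _) hN0) hNR
  have hNpos : (0:ℝ) < (N:ℝ) := by linarith
  have hNC : 4*|C|/ε < (N:ℝ) := lt_of_lt_of_le (lt_of_le_of_lt (le_max_right _ _) hN0) hNR
  rw [Real.dist_eq]
  show |1 / (N:ℝ) * Sm n N - L| < ε
  have heq : (1 / (N:ℝ)) * Sm n N - L = (1 / (N:ℝ)) * (Sm n N - L * N) := by
    field_simp
  rw [heq, abs_mul, abs_of_nonneg (by positivity : (0:ℝ) ≤ 1/(N:ℝ))]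
  have h1 : |Sm n N - L * N| ≤ ε/4 * N + C := hC N
  have h2 : (1/(N:ℝ)) * |Sm n N - L * N| ≤ (1/(N:ℝ)) * (ε/4 * N + C) := by
    apply mul_le_mul_of_nonneg_left h1 (by positivity)
  have h3 : (1/(N:ℝ)) * (ε/4 * N + C) = ε/4 + C/N := by
    field_simp
  have h4 : C/(N:ℝ) ≤ |C|/(N:ℝ) :=
    div_le_div_of_nonneg_right (le_abs_self C) hNpos.le
  have h5 : |C|/(N:ℝ) < ε/2 := by
    rw [div_lt_iff₀ hNpos]
    have : 4*|C| < ε * (N:ℝ) := by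
      rw [div_lt_iff₀ hε] at hNC
      linarith [hNC]
    nlinarith
  calc (1/(N:ℝ)) * |Sm n N - L * N| ≤ ε/4 + C/N := by rw [← h3]; exact h2
    _ < ε := by linarith
end

section
/- For every k ∈ ℕ with k ≠ 0, the Thue–Morse autocorrelation satisfies -1/3 ≤ σ(k) ≤ 1/3. -/
theorem sigma_bounds (σ : ℕ → ℝ) (h0 : σ 0 = 1) (h1 : σ 1 = -1/3)
    (heven : ∀ n : ℕ, σ (2 * n) = σ n)
    (hodd : ∀ n : ℕ, σ (2 * n + 1) = -(σ n + σ (n + 1)) / 2) :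
    ∀ k : ℕ, k ≠ 0 → -1/3 ≤ σ k ∧ σ k ≤ 1/3 := by
  intro k
  induction k using Nat.strong_induction_on with
  | _ k ih =>
    intro hk
    rcases Nat.even_or_odd k with ⟨n, hn⟩ | ⟨n, hn⟩
    · have hn2 : k = 2 * n := by omega
      have hne : n ≠ 0 := by omega
      have hlt : n < k := by omega
      have := ih n hlt hne
      rw [hn2, heven]
      exact this
    · have hn2 : k = 2 * n + 1 := by omega
      rcases Nat.eq_zero_or_pos n with h | h
      · subst h
        simp only [hn2]
        norm_num [h1]
      · have ha := ih n (by omega) (by omega)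
        have hb := ih (n + 1) (by omega) (by omega)
        rw [hn2, hodd]
        constructor <;> linarith [ha.1, ha.2, hb.1, hb.2]
end

section
/- For any M ∈ ℕ with M ≥ 1 and infinite sequences x, y, LSD(x,y) = liminf_{n→∞} SD(x[0..Mn-1], y[0..Mn-1]) and USD(x,y) = limsup_{n→∞} SD(x[0..Mn-1], y[0..Mn-1]). -/
open scoped Classical

open Filter

/-- Similarity density of length-`n` prefixes of two infinite sequences. -/
noncomputable def SDp {α : Type*} (x y : ℕ → α) (n : ℕ) : ℝ :=
  (∑ i ∈ Finset.range n, if x i = y i then (1 : ℝ) else 0) / n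

noncomputable def LSD {α : Type*} (x y : ℕ → α) : ℝ := Filter.liminf (SDp x y) Filter.atTop
noncomputable def USD {α : Type*} (x y : ℕ → α) : ℝ := Filter.limsup (SDp x y) Filter.atTop

private lemma real_ratio_est (a b m n Mr k : ℝ) (hk : 1 ≤ k) (hm : m = Mr * k)
    (hMr : 0 < Mr) (ha0 : 0 ≤ a) (ham : a ≤ m) (hab : a ≤ b) (hba : b ≤ a + Mr)
    (hmn : m ≤ n) (hnm : n ≤ m + Mr) : |b / n - a / m| ≤ 1 / k := by
  subst hm
  have hk0 : 0 < k := by linarith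
  have hm0 : 0 < Mr * k := by positivity
  have hn0 : 0 < n := by linarith
  have h1 : b / n - a / (Mr * k) ≤ 1 / k := by
    rw [div_sub_div _ _ hn0.ne' hm0.ne', div_le_div_iff₀ (by positivity) hk0]
    nlinarith [mul_le_mul_of_nonneg_right hba (mul_pos hm0 hk0).le,
      mul_le_mul_of_nonneg_right hmn (mul_nonneg ha0 hk0.le),
      mul_le_mul_of_nonneg_right hmn hm0.le]
  have h2 : a / (Mr * k) - b / n ≤ 1 / k := by
    rw [div_sub_div _ _ hm0.ne' hn0.ne', div_le_div_iff₀ (by positivity) hk0]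
    nlinarith [mul_le_mul_of_nonneg_left hab (mul_nonneg hm0.le hk0.le),
      mul_le_mul_of_nonneg_left hnm (mul_nonneg ha0 hk0.le),
      mul_le_mul_of_nonneg_right ham (mul_nonneg hk0.le hMr.le),
      mul_le_mul_of_nonneg_left hmn hm0.le]
  exact abs_le.2 ⟨by linarith, h1⟩

private lemma liminf_le_aux (u v : ℕ → ℝ) (hu0 : ∀ n, 0 ≤ u n) (hv0 : ∀ n, 0 ≤ v n)
    (hv1 : ∀ n, v n ≤ 1)
    (h : Tendsto (fun n => u n - v n) atTop (nhds 0)) :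
    liminf u atTop ≤ liminf v atTop := by
  refine le_of_forall_pos_le_add fun ε hε => ?_
  have hev : ∀ᶠ n in atTop, u n ≤ v n + ε := by
    filter_upwards [(Metric.tendsto_nhds.mp h) ε hε] with n hn
    rw [Real.dist_eq, sub_zero] at hn
    linarith [(abs_lt.mp hn).2]
  have hbdd : IsBoundedUnder (· ≥ ·) atTop u := isBoundedUnder_of ⟨0, fun n => hu0 n⟩
  have hvb : IsBoundedUnder (· ≥ ·) atTop v := isBoundedUnder_of ⟨0, fun n => hv0 n⟩
  have hvco : IsCoboundedUnder (· ≥ ·) atTop fun n => v n + ε :=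
    isCoboundedUnder_ge_of_le atTop (x := 1 + ε) fun n => by linarith [hv1 n]
  calc liminf u atTop ≤ liminf (fun n => v n + ε) atTop := liminf_le_liminf hev hbdd hvco
    _ = liminf v atTop + ε :=
      liminf_add_const atTop v ε (isCoboundedUnder_ge_of_le atTop fun n => hv1 n) hvb

private lemma limsup_le_aux (u v : ℕ → ℝ) (hu0 : ∀ n, 0 ≤ u n) (hv0 : ∀ n, 0 ≤ v n)
    (hv1 : ∀ n, v n ≤ 1)
    (h : Tendsto (fun n => u n - v n) atTop (nhds 0)) :
    limsup u atTop ≤ limsup v atTop := by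
  refine le_of_forall_pos_le_add fun ε hε => ?_
  have hev : ∀ᶠ n in atTop, u n ≤ v n + ε := by
    filter_upwards [(Metric.tendsto_nhds.mp h) ε hε] with n hn
    rw [Real.dist_eq, sub_zero] at hn
    linarith [(abs_lt.mp hn).2]
  have huco : IsCoboundedUnder (· ≤ ·) atTop u :=
    isCoboundedUnder_le_of_le atTop fun n => hu0 n
  have hvb : IsBoundedUnder (· ≤ ·) atTop v := isBoundedUnder_of ⟨1, fun n => hv1 n⟩
  have hvb' : IsBoundedUnder (· ≤ ·) atTop fun n => v n + ε :=
    isBoundedUnder_of ⟨1 + ε, fun n => by linarith [hv1 n]⟩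
  calc limsup u atTop ≤ limsup (fun n => v n + ε) atTop := limsup_le_limsup hev huco hvb'
    _ = limsup v atTop + ε :=
      limsup_add_const atTop v ε hvb (isCoboundedUnder_le_of_le atTop fun n => hv0 n)

theorem LSD_USD_fixed_interval {α : Type*} (M : ℕ) (hM : 1 ≤ M) (x y : ℕ → α) :
    LSD x y = Filter.liminf (fun n : ℕ => SDp x y (M * n)) Filter.atTop ∧
      USD x y = Filter.limsup (fun n : ℕ => SDp x y (M * n)) Filter.atTop := by
  set S : ℕ → ℝ := fun n => ∑ i ∈ Finset.range n, if x i = y i then (1 : ℝ) else 0 with hS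
  have hterm : ∀ i, (0 : ℝ) ≤ (if x i = y i then (1 : ℝ) else 0) := fun i => by positivity
  have hterm1 : ∀ i, (if x i = y i then (1 : ℝ) else 0) ≤ 1 := fun i => by
    split <;> norm_num
  have hS0 : ∀ n, 0 ≤ S n := fun n => Finset.sum_nonneg fun i _ => hterm i
  have hSle : ∀ n, S n ≤ n := fun n => by
    calc S n ≤ ∑ _i ∈ Finset.range n, (1 : ℝ) :=
        Finset.sum_le_sum fun i _ => hterm1 i
      _ = n := by simp
  have hSmono : ∀ {m n : ℕ}, m ≤ n → S m ≤ S n := fun {m n} h =>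
    Finset.sum_le_sum_of_subset_of_nonneg (Finset.range_subset_range.2 h) fun i _ _ => hterm i
  have hSadd : ∀ {m n : ℕ}, m ≤ n → S n ≤ S m + ((n - m : ℕ) : ℝ) := by
    intro m n h
    have heq := Finset.sum_range_add_sum_Ico (fun i => if x i = y i then (1 : ℝ) else 0) h
    have hico : ∑ i ∈ Finset.Ico m n, (if x i = y i then (1 : ℝ) else 0) ≤ ((n - m : ℕ) : ℝ) := by
      calc _ ≤ ∑ _i ∈ Finset.Ico m n, (1 : ℝ) := Finset.sum_le_sum fun i _ => hterm1 i
        _ = ((n - m : ℕ) : ℝ) := by simp [Nat.card_Ico]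
    have h1 : S m + ∑ i ∈ Finset.Ico m n, (if x i = y i then (1 : ℝ) else 0) = S n := heq
    linarith
  have hu0 : ∀ n, 0 ≤ SDp x y n := fun n => by
    unfold SDp; positivity
  have hu1 : ∀ n, SDp x y n ≤ 1 := fun n => by
    unfold SDp
    rcases Nat.eq_zero_or_pos n with rfl | hn
    · simp
    · rw [div_le_one (by exact_mod_cast hn)]
      exact hSle n
  have hM0 : (0 : ℝ) < M := by exact_mod_cast hM
  -- key estimate
  have hdiff : ∀ n : ℕ, M ≤ n →
      |SDp x y n - SDp x y (M * (n / M))| ≤ 1 / ((n / M : ℕ) : ℝ) := by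
    intro n hn
    have hk1 : 1 ≤ n / M := (Nat.one_le_div_iff (by omega)).2 hn
    have hmn : M * (n / M) ≤ n := Nat.mul_div_le n M
    have hnm : n < M * (n / M) + M := by
      rw [Nat.mul_comm]
      exact Nat.lt_div_mul_add (by omega)
    have hsub : ((n - M * (n / M) : ℕ) : ℝ) ≤ (M : ℝ) := by
      have : n - M * (n / M) ≤ M := by omega
      exact_mod_cast this
    unfold SDp
    refine real_ratio_est (S (M * (n / M))) (S n) ((M * (n / M) : ℕ) : ℝ) (n : ℝ)
      (M : ℝ) ((n / M : ℕ) : ℝ) (by exact_mod_cast hk1) (by push_cast; ring) hM0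
      (hS0 _) (hSle _) (hSmono hmn) ?_ (by exact_mod_cast hmn) (by exact_mod_cast hnm.le)
    calc S n ≤ S (M * (n / M)) + ((n - M * (n / M) : ℕ) : ℝ) := hSadd hmn
      _ ≤ S (M * (n / M)) + (M : ℝ) := by linarith
  have hdivT : Tendsto (fun n : ℕ => n / M) atTop atTop :=
    (Filter.map_div_atTop_eq_nat M (by omega)).le
  have htend : Tendsto (fun n => SDp x y n - SDp x y (M * (n / M))) atTop (nhds 0) := by
    refine squeeze_zero_norm' ?_
      (tendsto_one_div_atTop_nhds_zero_nat.comp hdivT)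
    filter_upwards [eventually_ge_atTop M] with n hn
    simpa using hdiff n hn
  have htend' : Tendsto (fun n => SDp x y (M * (n / M)) - SDp x y n) atTop (nhds 0) := by
    have := htend.neg
    simpa using this
  set v : ℕ → ℝ := fun n => SDp x y (M * (n / M)) with hv
  have hv0 : ∀ n, 0 ≤ v n := fun n => hu0 _
  have hv1 : ∀ n, v n ≤ 1 := fun n => hu1 _
  have hlim : liminf (SDp x y) atTop = liminf v atTop :=
    le_antisymm (liminf_le_aux _ _ hu0 hv0 hv1 htend) (liminf_le_aux _ _ hv0 hu0 hu1 htend')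
  have hlsup : limsup (SDp x y) atTop = limsup v atTop :=
    le_antisymm (limsup_le_aux _ _ hu0 hv0 hv1 htend) (limsup_le_aux _ _ hv0 hu0 hu1 htend')
  have hmapinf : liminf v atTop = liminf (fun n : ℕ => SDp x y (M * n)) atTop := by
    have hc : v = (fun k : ℕ => SDp x y (M * k)) ∘ (fun n : ℕ => n / M) := rfl
    rw [hc, Filter.liminf, Filter.liminf, ← Filter.map_map,
      Filter.map_div_atTop_eq_nat M (by omega)]
  have hmapsup : limsup v atTop = limsup (fun n : ℕ => SDp x y (M * n)) atTop := by
    have hc : v = (fun k : ℕ => SDp x y (M * k)) ∘ (fun n : ℕ => n / M) := rfl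
    rw [hc, Filter.limsup, Filter.limsup, ← Filter.map_map,
      Filter.map_div_atTop_eq_nat M (by omega)]
  exact ⟨by rw [LSD, hlim, hmapinf], by rw [USD, hlsup, hmapsup]⟩
end

section
/- For every nonzero k ∈ ℕ, the limit lim_{n→∞} SD(t[0..n-1], t[k..n+k-1]) exists and lies in the interval [1/3, 2/3], where t is the Thue–Morse sequence. -/
lemma t_lt_two (n : ℕ) : t n < 2 := Nat.mod_lt _ (by norm_num)

lemma t_two_mul (n : ℕ) : t (2 * n) = t n := by
  rcases Nat.eq_zero_or_pos n with h | h
  · simp [h]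
  · unfold t
    rw [Nat.digits_def' (by norm_num : 1 < 2) (by omega : 0 < 2 * n)]
    simp [Nat.mul_div_cancel_left _ (by norm_num : 0 < 2), Nat.mul_mod_right]

lemma t_two_mul_add_one (n : ℕ) : t (2 * n + 1) = (t n + 1) % 2 := by
  unfold t
  rw [Nat.digits_def' (by norm_num : 1 < 2) (by omega : 0 < 2 * n + 1)]
  have h1 : (2 * n + 1) % 2 = 1 := by omega
  have h2 : (2 * n + 1) / 2 = n := by omega
  rw [h1, h2]
  simp [List.count_cons]

noncomputable def a (n : ℕ) : ℝ := if t n = 0 then 1 else -1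

lemma a_two_mul (n : ℕ) : a (2 * n) = a n := by unfold a; rw [t_two_mul]

lemma a_two_mul_add_one (n : ℕ) : a (2 * n + 1) = -a n := by
  unfold a
  rw [t_two_mul_add_one]
  have := t_lt_two n
  interval_cases h : t n <;> norm_num

lemma a_mul_self (n : ℕ) : a n * a n = 1 := by unfold a; split <;> norm_num

lemma abs_a (n : ℕ) : |a n| = 1 := by unfold a; split <;> norm_num

noncomputable def S (n k : ℕ) : ℝ := ∑ i ∈ Finset.range n, a i * a (i + k)

lemma S_zero (k : ℕ) : S 0 k = 0 := by simp [S]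

lemma S_succ (n k : ℕ) : S (n + 1) k = S n k + a n * a (n + k) := by
  simp [S, Finset.sum_range_succ]

lemma S_n_zero (n : ℕ) : S n 0 = n := by
  induction n with
  | zero => simp [S]
  | succ n ih =>
    rw [S_succ, ih, Nat.add_zero, a_mul_self]
    push_cast; ring

lemma S_even_even (n m : ℕ) : S (2 * n) (2 * m) = 2 * S n m := by
  induction n with
  | zero => simp [S]
  | succ n ih =>
    have h : 2 * (n + 1) = (2 * n + 1) + 1 := by ring
    rw [h, S_succ, S_succ, ih, S_succ]
    have e1 : 2 * n + 2 * m = 2 * (n + m) := by ring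
    have e2 : 2 * n + 1 + 2 * m = 2 * (n + m) + 1 := by ring
    rw [e1, e2, a_two_mul, a_two_mul, a_two_mul_add_one, a_two_mul_add_one]
    ring

lemma S_even_odd (n m : ℕ) : S (2 * n) (2 * m + 1) = -(S n m + S n (m + 1)) := by
  induction n with
  | zero => simp [S]
  | succ n ih =>
    have h : 2 * (n + 1) = (2 * n + 1) + 1 := by ring
    rw [h, S_succ, S_succ, ih, S_succ, S_succ]
    have e1 : 2 * n + (2 * m + 1) = 2 * (n + m) + 1 := by ring
    have e2 : 2 * n + 1 + (2 * m + 1) = 2 * (n + m + 1) := by ring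
    have e3 : n + (m + 1) = n + m + 1 := by ring
    rw [e1, e2, e3, a_two_mul, a_two_mul, a_two_mul_add_one, a_two_mul_add_one]
    ring

noncomputable def g (k : ℕ) : ℝ :=
  if h0 : k = 0 then 1
  else if h1 : k = 1 then -(1/3)
  else if h2 : k % 2 = 0 then g (k / 2)
  else -(g (k / 2) + g (k / 2 + 1)) / 2
decreasing_by all_goals omega

lemma g_zero : g 0 = 1 := by rw [g]; norm_num
lemma g_one : g 1 = -(1/3) := by rw [g]; norm_num

lemma g_two_mul (m : ℕ) : g (2 * m) = g m := by
  rcases Nat.eq_zero_or_pos m with h | h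
  · simp [h]
  · rw [g]
    have h0 : ¬ (2 * m = 0) := by omega
    have h1 : ¬ (2 * m = 1) := by omega
    have h2 : 2 * m % 2 = 0 := by omega
    have h3 : 2 * m / 2 = m := by omega
    simp [h0, h1, h2, h3]

lemma g_two_mul_add_one (m : ℕ) : g (2 * m + 1) = -(g m + g (m + 1)) / 2 := by
  rcases Nat.eq_zero_or_pos m with h | h
  · subst h
    simp only [Nat.mul_zero, Nat.zero_add, Nat.zero_add]
    rw [g_one, g_zero]
    norm_num [g_one]
  · rw [g]
    have h0 : ¬ (2 * m + 1 = 0) := by omega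
    have h1 : ¬ (2 * m + 1 = 1) := by omega
    have h2 : ¬ ((2 * m + 1) % 2 = 0) := by omega
    have h3 : (2 * m + 1) / 2 = m := by omega
    simp [h0, h1, h2, h3, h.ne']

lemma abs_g_le_third : ∀ k, 1 ≤ k → |g k| ≤ 1/3 := by
  intro k
  induction k using Nat.strong_induction_on with
  | _ k ih =>
    intro hk
    rcases Nat.even_or_odd k with ⟨m, hm⟩ | ⟨m, hm⟩
    · subst hm
      rw [(by ring : m + m = 2 * m), g_two_mul]
      exact ih m (by omega) (by omega)
    · subst hm
      rw [g_two_mul_add_one]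
      rcases Nat.eq_zero_or_pos m with h | h
      · subst h; rw [g_zero, g_one]; rw [abs_le]; constructor <;> norm_num
      · have h1 := ih m (by omega) (by omega)
        have h2 := ih (m + 1) (by omega) (by omega)
        rw [abs_le] at *
        constructor <;> [skip; skip] <;> nlinarith [h1.1, h1.2, h2.1, h2.2]

lemma abs_g_le_one (k : ℕ) : |g k| ≤ 1 := by
  rcases Nat.eq_zero_or_pos k with h | h
  · subst h; rw [g_zero]; norm_num
  · linarith [abs_g_le_third k h]

def B : ℕ → ℕ
  | k => if k = 0 then 2 else 2 * B (k / 2) + 2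
decreasing_by omega

lemma B_zero : B 0 = 2 := by rw [B]; norm_num
lemma B_pos_k (k : ℕ) (h : k ≠ 0) : B k = 2 * B (k / 2) + 2 := by rw [B]; simp [h]
lemma B_pos (k : ℕ) : 0 < B k := by rw [B]; split <;> omega

lemma err_even (n' b m : ℕ) (hb : b < 2) :
    |S (2 * n' + b) (2 * m) - ((2 * n' + b : ℕ) : ℝ) * g (2 * m)| ≤
      2 * |S n' m - (n' : ℝ) * g m| + 2 := by
  rw [g_two_mul]
  interval_cases b
  · rw [Nat.add_zero, S_even_even]
    push_cast
    have : 2 * S n' m - 2 * (n' : ℝ) * g m = 2 * (S n' m - (n' : ℝ) * g m) := by ring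
    rw [this, abs_mul, abs_two]
    linarith [abs_nonneg (S n' m - (n' : ℝ) * g m)]
  · rw [S_succ, S_even_even]
    push_cast
    have habs : |a (2 * n') * a (2 * n' + 2 * m)| = 1 := by
      rw [abs_mul, abs_a, abs_a]; norm_num
    have hg : |g m| ≤ 1 := abs_g_le_one m
    set r := a (2 * n') * a (2 * n' + 2 * m)
    have : 2 * S n' m + r - (2 * (n' : ℝ) + 1) * g m =
        2 * (S n' m - (n' : ℝ) * g m) + (r - g m) := by ring
    rw [this]
    calc |2 * (S n' m - (n' : ℝ) * g m) + (r - g m)|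
        ≤ |2 * (S n' m - (n' : ℝ) * g m)| + |r - g m| := abs_add_le _ _
      _ ≤ 2 * |S n' m - (n' : ℝ) * g m| + (|r| + |g m|) := by
          rw [abs_mul, abs_two]; gcongr; exact abs_sub _ _
      _ ≤ 2 * |S n' m - (n' : ℝ) * g m| + 2 := by rw [habs]; linarith

lemma err_odd (n' b m : ℕ) (hb : b < 2) :
    |S (2 * n' + b) (2 * m + 1) - ((2 * n' + b : ℕ) : ℝ) * g (2 * m + 1)| ≤
      |S n' m - (n' : ℝ) * g m| + |S n' (m + 1) - (n' : ℝ) * g (m + 1)| + 2 := by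
  rw [g_two_mul_add_one]
  have hg1 : |g m| ≤ 1 := abs_g_le_one m
  have hg2 : |g (m + 1)| ≤ 1 := abs_g_le_one (m + 1)
  interval_cases b
  · rw [Nat.add_zero, S_even_odd]
    push_cast
    have : -(S n' m + S n' (m + 1)) - 2 * (n' : ℝ) * (-(g m + g (m + 1)) / 2) =
        -((S n' m - (n' : ℝ) * g m) + (S n' (m + 1) - (n' : ℝ) * g (m + 1))) := by ring
    rw [this, abs_neg]
    calc _ ≤ |S n' m - (n' : ℝ) * g m| + |S n' (m + 1) - (n' : ℝ) * g (m + 1)| := abs_add_le _ _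
      _ ≤ _ := by linarith
  · rw [S_succ, S_even_odd]
    push_cast
    have habs : |a (2 * n') * a (2 * n' + (2 * m + 1))| = 1 := by
      rw [abs_mul, abs_a, abs_a]; norm_num
    set r := a (2 * n') * a (2 * n' + (2 * m + 1))
    have : -(S n' m + S n' (m + 1)) + r - (2 * (n' : ℝ) + 1) * (-(g m + g (m + 1)) / 2) =
        -((S n' m - (n' : ℝ) * g m) + (S n' (m + 1) - (n' : ℝ) * g (m + 1))) +
          (r + (g m + g (m + 1)) / 2) := by ring
    rw [this]
    calc _ ≤ |-((S n' m - (n' : ℝ) * g m) + (S n' (m + 1) - (n' : ℝ) * g (m + 1)))| +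
            |r + (g m + g (m + 1)) / 2| := abs_add_le _ _
      _ ≤ (|S n' m - (n' : ℝ) * g m| + |S n' (m + 1) - (n' : ℝ) * g (m + 1)|) +
            (|r| + (|g m| + |g (m + 1)|) / 2) := by
          rw [abs_neg]
          gcongr
          · exact abs_add_le _ _
          · calc |r + (g m + g (m + 1)) / 2| ≤ |r| + |(g m + g (m + 1)) / 2| := abs_add_le _ _
              _ ≤ |r| + (|g m| + |g (m + 1)|) / 2 := by
                  rw [abs_div, abs_two]; gcongr; exact abs_add_le _ _
      _ ≤ _ := by rw [habs]; linarith

lemma key_s9 : ∀ j k n : ℕ, n < 2 ^ j →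
    |S n k - (n : ℝ) * g k| ≤ (B k : ℝ) * j ∧
    |S n (k + 1) - (n : ℝ) * g (k + 1)| ≤ (B k : ℝ) * j := by
  intro j
  induction j with
  | zero =>
    intro k n hn
    interval_cases n
    simp [S_zero]
  | succ j ih =>
    intro k n hn
    rcases Nat.eq_zero_or_pos n with h0 | h0
    · subst h0
      have : (0:ℝ) ≤ (B k : ℝ) * (j + 1 : ℕ) := by positivity
      simp only [S_zero, Nat.cast_zero, zero_mul, sub_zero, abs_zero]
      exact ⟨this, this⟩
    · set n' := n / 2 with hn'
      set b := n % 2 with hb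
      have hnb : n = 2 * n' + b := by omega
      have hblt : b < 2 := by omega
      have hn'lt : n' < 2 ^ j := by
        have := hn
        rw [pow_succ] at this
        omega
      rcases Nat.eq_zero_or_pos k with hk0 | hk0
      · subst hk0
        constructor
        · rw [S_n_zero, g_zero]
          simp
          positivity
        · have h2 := (ih 0 n' hn'lt).2
          have h1 := (ih 0 n' hn'lt).1
          have h0' : |S n' 0 - (n' : ℝ) * g 0| = 0 := by
            rw [S_n_zero, g_zero]; simp
          rw [h0'] at h1
          have := err_odd n' b 0 hblt
          rw [hnb]
          have hB : (B 0 : ℝ) = 2 := by rw [B_zero]; norm_num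
          simp only [Nat.mul_zero, Nat.zero_add] at this ⊢
          calc |S (2 * n' + b) (0 + 1) - ((2 * n' + b : ℕ) : ℝ) * g (0 + 1)| ≤
              |S n' 0 - (n' : ℝ) * g 0| + |S n' (0 + 1) - (n' : ℝ) * g (0 + 1)| + 2 := this
            _ ≤ 0 + (B 0 : ℝ) * j + 2 := by rw [h0']; gcongr
            _ ≤ (B 0 : ℝ) * (j + 1 : ℕ) := by rw [hB]; push_cast; linarith
      · set m := k / 2 with hm
        have hI1 := (ih m n' hn'lt).1
        have hI2 := (ih m n' hn'lt).2
        have hBk : (B k : ℝ) = 2 * (B m : ℝ) + 2 := by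
          rw [B_pos_k k (by omega)]; push_cast; ring
        have hBm : (0:ℝ) ≤ (B m : ℝ) := by positivity
        have harith : 2 * ((B m : ℝ) * j) + 2 ≤ (B k : ℝ) * (j + 1 : ℕ) := by
          rw [hBk]; push_cast; nlinarith [Nat.cast_nonneg (α := ℝ) j]
        rcases Nat.even_or_odd k with ⟨l, hl⟩ | ⟨l, hl⟩
        · -- k = 2 * l, and l = m
          have hlm : l = m := by omega
          subst hlm
          have hkk : k = 2 * m := by omega
          constructor
          · calc |S n k - (n : ℝ) * g k|
                = |S (2 * n' + b) (2 * m) - ((2 * n' + b : ℕ) : ℝ) * g (2 * m)| := by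
                  rw [hnb, hkk]
              _ ≤
                2 * |S n' m - (n' : ℝ) * g m| + 2 := err_even n' b m hblt
              _ ≤ 2 * ((B m : ℝ) * j) + 2 := by gcongr
              _ ≤ _ := harith
          · calc |S n (k + 1) - (n : ℝ) * g (k + 1)|
                = |S (2 * n' + b) (2 * m + 1) - ((2 * n' + b : ℕ) : ℝ) * g (2 * m + 1)| := by
                  rw [hnb, (by omega : k + 1 = 2 * m + 1)]
              _ ≤
                |S n' m - (n' : ℝ) * g m| + |S n' (m + 1) - (n' : ℝ) * g (m + 1)| + 2 :=
                  err_odd n' b m hblt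
              _ ≤ (B m : ℝ) * j + (B m : ℝ) * j + 2 := by gcongr
              _ ≤ _ := by linarith [harith]
        · -- k = 2 * l + 1, l = m
          have hlm : l = m := by omega
          subst hlm
          constructor
          · calc |S n k - (n : ℝ) * g k|
                = |S (2 * n' + b) (2 * m + 1) - ((2 * n' + b : ℕ) : ℝ) * g (2 * m + 1)| := by
                  rw [hnb, hl]
              _ ≤
                |S n' m - (n' : ℝ) * g m| + |S n' (m + 1) - (n' : ℝ) * g (m + 1)| + 2 :=
                  err_odd n' b m hblt
              _ ≤ (B m : ℝ) * j + (B m : ℝ) * j + 2 := by gcongr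
              _ ≤ _ := by linarith [harith]
          · calc |S n (k + 1) - (n : ℝ) * g (k + 1)|
                = |S (2 * n' + b) (2 * (m + 1)) - ((2 * n' + b : ℕ) : ℝ) * g (2 * (m + 1))| := by
                  rw [hnb, (by omega : k + 1 = 2 * (m + 1))]
              _ ≤
                2 * |S n' (m + 1) - (n' : ℝ) * g (m + 1)| + 2 := err_even n' b (m + 1) hblt
              _ ≤ 2 * ((B m : ℝ) * j) + 2 := by gcongr
              _ ≤ _ := harith

lemma tendsto_S_div (k : ℕ) :
    Filter.Tendsto (fun n : ℕ => S n k / n) Filter.atTop (nhds (g k)) := by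
  have h0 : Filter.Tendsto (fun n : ℕ => S n k / n - g k) Filter.atTop (nhds 0) := by
    apply squeeze_zero_norm'
      (a := fun n : ℕ => (B k : ℝ) * ((Real.log n / Real.log 2 + 1) / n + 1 / n))
    · filter_upwards [Filter.eventually_ge_atTop 1] with n hn
      have hn0 : (0:ℝ) < n := by exact_mod_cast hn
      have hkey := (key_s9 (Nat.log 2 n + 1) k n (Nat.lt_pow_succ_log_self (by norm_num) n)).1
      have hlog : (Nat.log 2 n : ℝ) ≤ Real.log n / Real.log 2 := by
        have := Real.natLog_le_logb n 2
        rwa [Real.logb] at this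
      have hnne : (n:ℝ) ≠ 0 := ne_of_gt hn0
      have habs : |S n k / n - g k| = |S n k - (n : ℝ) * g k| / n := by
        rw [show S n k / n - g k = (S n k - (n : ℝ) * g k) / n by field_simp, abs_div,
          abs_of_pos hn0]
      rw [Real.norm_eq_abs, habs]
      rw [div_le_iff₀ hn0]
      calc |S n k - (n : ℝ) * g k| ≤ (B k : ℝ) * ((Nat.log 2 n : ℝ) + 1) := by
            push_cast at hkey ⊢; linarith [hkey]
        _ ≤ (B k : ℝ) * (Real.log n / Real.log 2 + 1 + 1) := by
            have : (0:ℝ) ≤ (B k : ℝ) := by positivity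
            nlinarith
        _ = (B k : ℝ) * ((Real.log n / Real.log 2 + 1) / n + 1 / n) * n := by
            field_simp
    · have hlog0 : Filter.Tendsto (fun n : ℕ => Real.log n / n) Filter.atTop (nhds 0) := by
        have := Real.isLittleO_log_id_atTop.tendsto_div_nhds_zero
        exact (this.comp tendsto_natCast_atTop_atTop)
      have hinv : Filter.Tendsto (fun n : ℕ => (1:ℝ) / n) Filter.atTop (nhds 0) :=
        tendsto_one_div_atTop_nhds_zero_nat
      have h2 : Filter.Tendsto
          (fun n : ℕ => (Real.log n / Real.log 2 + 1) / n + 1 / n) Filter.atTop (nhds 0) := by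
        have h3 : Filter.Tendsto (fun n : ℕ => (Real.log n / Real.log 2 + 1) / n)
            Filter.atTop (nhds 0) := by
          have : (fun n : ℕ => (Real.log n / Real.log 2 + 1) / n) =
              fun n : ℕ => (1 / Real.log 2) * (Real.log n / n) + 1 / n := by
            have hl2 : Real.log 2 ≠ 0 := ne_of_gt (Real.log_pos (by norm_num))
            funext n
            rcases eq_or_ne (n:ℝ) 0 with h | h
            · rw [h]; simp
            · field_simp
          rw [this]
          have := (hlog0.const_mul (1 / Real.log 2)).add hinv
          simpa using this
        simpa using h3.add hinv
      have := h2.const_mul (B k : ℝ)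
      simpa using this
  have := h0.add_const (g k)
  simpa using this

theorem mahler_shift_limit (k : ℕ) (hk : k ≠ 0) :
    ∃ L : ℝ, Filter.Tendsto
        (fun n : ℕ => (∑ i ∈ Finset.range n, if t i = t (i + k) then (1 : ℝ) else 0) / n)
        Filter.atTop (nhds L) ∧ 1/3 ≤ L ∧ L ≤ 2/3 := by
  refine ⟨(1 + g k) / 2, ?_, ?_, ?_⟩
  · have hsum : ∀ n : ℕ, (∑ i ∈ Finset.range n, if t i = t (i + k) then (1 : ℝ) else 0) =
        ((n : ℝ) + S n k) / 2 := by
      intro n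
      have hpt : ∀ i, (if t i = t (i + k) then (1 : ℝ) else 0) = (1 + a i * a (i + k)) / 2 := by
        intro i
        have h1 := t_lt_two i
        have h2 := t_lt_two (i + k)
        unfold a
        interval_cases h3 : t i <;> interval_cases h4 : t (i + k) <;> simp [h3, h4]
      simp only [hpt]
      rw [← Finset.sum_div, Finset.sum_add_distrib, Finset.sum_const, Finset.card_range,
        nsmul_eq_mul, mul_one, S]
    have heq : ∀ᶠ n : ℕ in Filter.atTop,
        (∑ i ∈ Finset.range n, if t i = t (i + k) then (1 : ℝ) else 0) / n =
        1 / 2 + (S n k / n) / 2 := by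
      filter_upwards [Filter.eventually_ge_atTop 1] with n hn
      have hn0 : (0:ℝ) < n := by exact_mod_cast hn
      rw [hsum, div_div, add_div]
      have h1 : (n:ℝ) / (2 * n) = 1 / 2 := by
        rw [div_eq_div_iff (by positivity) (by norm_num)]; ring
      rw [h1, div_div, mul_comm (n:ℝ) 2]
    have htends : Filter.Tendsto (fun n : ℕ => 1 / 2 + (S n k / n) / 2)
        Filter.atTop (nhds (1 / 2 + g k / 2)) := by
      have := (tendsto_S_div k).div_const 2
      have := this.const_add (1 / 2 : ℝ)
      simpa using this
    have : (1 + g k) / 2 = 1 / 2 + g k / 2 := by ring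
    rw [this]
    exact htends.congr' (heq.mono fun n h => h.symm)
  · have := abs_g_le_third k (by omega)
    rw [abs_le] at this
    linarith [this.1]
  · have := abs_g_le_third k (by omega)
    rw [abs_le] at this
    linarith [this.2]
end

section
/- Let h be the sequence whose n-th term is the parity of the number of 0s in the binary representation of n (with h[0] = 0). Then for every n ∈ ℕ, the block h[2^n .. 2^{n+1}-1] equals t_n if n is even and equals the complement of t_n if n is odd, where t_n = μ^n(0) is the length-2^n Thue–Morse prefix. -/
/-- The Thue–Morse morphism on binary words over {0,1} ⊆ ℕ. -/
def mu (l : List ℕ) : List ℕ := l.flatMap (fun b => [b, 1 - b])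

/-- The length-2^n Thue–Morse prefix t_n = μ^n(0). -/
def tWord (n : ℕ) : List ℕ := mu^[n] [0]

/-- Bitwise complement of a binary word. -/
def comp (l : List ℕ) : List ℕ := l.map (fun b => 1 - b)

/-- The sequence h: parity of the number of 0s in the binary representation (h 0 = 0). -/
def hseq (n : ℕ) : ℕ := (Nat.digits 2 n).count 0 % 2

lemma hseq_le (m : ℕ) : hseq m ≤ 1 := Nat.lt_succ_iff.mp (Nat.mod_lt _ (by norm_num))

lemma hseq_even (m : ℕ) (hm : 0 < m) : hseq (2*m) = 1 - hseq m := by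
  unfold hseq
  rw [Nat.digits_def' (by norm_num : (1:ℕ) < 2) (by omega : 0 < 2*m)]
  rw [Nat.mul_mod_right, Nat.mul_div_cancel_left _ (by norm_num : 0 < 2)]
  rw [List.count_cons]
  simp
  omega

lemma hseq_odd (m : ℕ) : hseq (2*m+1) = hseq m := by
  unfold hseq
  rw [Nat.digits_def' (by norm_num : (1:ℕ) < 2) (by omega : 0 < 2*m+1)]
  have h1 : (2*m+1) % 2 = 1 := by omega
  have h2 : (2*m+1) / 2 = m := by omega
  rw [h1, h2, List.count_cons]
  simp

lemma tWord_succ (n : ℕ) : tWord (n+1) = mu (tWord n) := by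
  unfold tWord; rw [Function.iterate_succ_apply']

lemma tWord_le (n : ℕ) : ∀ b ∈ tWord n, b ≤ 1 := by
  induction n with
  | zero => simp [tWord]
  | succ k ih =>
    rw [tWord_succ]
    intro b hb
    unfold mu at hb
    simp [List.mem_flatMap] at hb
    obtain ⟨a, ha, hb⟩ := hb
    have := ih a ha
    omega

lemma comp_mu (l : List ℕ) : comp (mu l) = l.flatMap (fun b => [1-b, 1-(1-b)]) := by
  unfold comp mu
  rw [List.map_flatMap]
  rfl

lemma flat_eq (l : List ℕ) (h : ∀ b ∈ l, b ≤ 1) :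
    l.flatMap (fun b => [1-b, b]) = comp (mu l) := by
  rw [comp_mu]
  induction l with
  | nil => simp
  | cons a l ih =>
    simp only [List.flatMap_cons]
    rw [ih (fun b hb => h b (List.mem_cons_of_mem a hb))]
    have ha : a ≤ 1 := h a List.mem_cons_self
    have h2 : 1 - (1 - a) = a := by omega
    rw [h2]

lemma mu_le (l : List ℕ) (h : ∀ b ∈ l, b ≤ 1) : ∀ b ∈ mu l, b ≤ 1 := by
  intro b hb
  unfold mu at hb
  simp [List.mem_flatMap] at hb
  obtain ⟨a, ha, hb⟩ := hb
  have := h a ha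
  omega

lemma mu_comp (l : List ℕ) (h : ∀ b ∈ l, b ≤ 1) : mu (comp l) = comp (mu l) := by
  induction l with
  | nil => rfl
  | cons a l ih =>
    have ha : a ≤ 1 := h a List.mem_cons_self
    have := ih (fun b hb => h b (List.mem_cons_of_mem a hb))
    unfold mu comp at this ⊢
    simp only [List.map_cons, List.flatMap_cons] at this ⊢
    rw [this]
    have h2 : 1 - (1 - a) = a := by omega
    simp only [List.map_append, List.map_cons, List.map_nil, h2]

lemma comp_comp (l : List ℕ) (h : ∀ b ∈ l, b ≤ 1) : comp (comp l) = l := by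
  induction l with
  | nil => rfl
  | cons a l ih =>
    have ha : a ≤ 1 := h a List.mem_cons_self
    have := ih (fun b hb => h b (List.mem_cons_of_mem a hb))
    unfold comp at this ⊢
    simp only [List.map_cons] at this ⊢
    rw [this]
    have h2 : 1 - (1 - a) = a := by omega
    rw [h2]

lemma range_two (m : ℕ) (f : ℕ → ℕ) :
    (List.range (2*m)).map f = (List.range m).flatMap (fun q => [f (2*q), f (2*q+1)]) := by
  induction m with
  | zero => simp
  | succ k ih =>
    rw [List.range_succ, List.flatMap_append, ← ih]
    have h2 : 2*(k+1) = (2*k+1)+1 := by ring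
    rw [h2, List.range_succ, List.range_succ]
    simp [mul_add]

theorem h_blocks (n : ℕ) :
    (List.range (2 ^ n)).map (fun j => hseq (2 ^ n + j)) =
      if Even n then tWord n else comp (tWord n) := by
  induction n with
  | zero =>
    have h1 : hseq 1 = 0 := by
      have := hseq_odd 0
      simp [hseq] at this ⊢
    have hr : List.range 1 = [0] := rfl
    simp only [pow_zero, hr, List.map_cons, List.map_nil]
    simp [tWord, h1]
  | succ k ih =>
    have hpow : (2:ℕ) ^ (k+1) = 2 * 2 ^ k := by ring
    rw [hpow, range_two]
    have key : (List.range (2^k)).flatMap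
        (fun q => [hseq (2*2^k + 2*q), hseq (2*2^k + (2*q+1))]) =
        (List.range (2^k)).flatMap (fun q => [1 - hseq (2^k + q), hseq (2^k + q)]) := by
      apply List.flatMap_congr
      intro q hq
      have h1 : 2*2^k + 2*q = 2*(2^k + q) := by ring
      have h2 : 2*2^k + (2*q+1) = 2*(2^k + q) + 1 := by ring
      rw [h1, h2, hseq_even _ (by positivity), hseq_odd]
    rw [key]
    have hflat : (List.range (2^k)).flatMap (fun q => [1 - hseq (2^k + q), hseq (2^k + q)]) =
        ((List.range (2^k)).map (fun j => hseq (2^k + j))).flatMap (fun b => [1-b, b]) := by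
      rw [List.flatMap_map]
    rw [hflat, ih]
    by_cases hk : Even k
    · rw [if_pos hk, if_neg (by simp [Nat.even_add_one, hk])]
      rw [flat_eq _ (tWord_le k), tWord_succ]
    · rw [if_neg hk, if_pos (by simp [Nat.even_add_one, hk])]
      have hc : ∀ b ∈ comp (tWord k), b ≤ 1 := by
        intro b hb
        simp [comp] at hb
        omega
      rw [flat_eq _ hc, tWord_succ, mu_comp _ (tWord_le k),
        comp_comp _ (mu_le _ (tWord_le k))]
end

section
/- For all n ∈ ℕ and all i with 1 ≤ i ≤ 2^n - 1, SD(t_n, (t_n t_n)[i .. 2^n + i - 1]) equals 0 if i = 2^{n-1}, and lies in [1/4, 3/4] otherwise. -/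
/-- Similarity density of two finite words (of the same length). -/
noncomputable def SD (x y : List ℕ) : ℝ :=
  (List.zipWith (fun a b => if a = b then (1 : ℝ) else 0) x y).sum / x.length

/-! ### Auxiliary development: the Thue–Morse function and correlation counts -/

/-- The Thue–Morse function: parity of the binary digit sum. -/
def tm (n : ℕ) : ℕ := (Nat.digits 2 n).sum % 2

lemma tm_le (n : ℕ) : tm n ≤ 1 := Nat.lt_succ_iff.mp (Nat.mod_lt _ (by norm_num))

lemma tm_even (j : ℕ) : tm (2 * j) = tm j := by
  rcases Nat.eq_zero_or_pos j with rfl | hj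
  · rfl
  · unfold tm
    rw [Nat.digits_def' (by norm_num : 1 < 2) (by omega)]
    simp [Nat.mul_div_cancel_left _ (by norm_num : 0 < 2), Nat.mul_mod_right]

lemma tm_odd (j : ℕ) : tm (2 * j + 1) = 1 - tm j := by
  unfold tm
  rw [Nat.digits_def' (by norm_num : 1 < 2) (by omega)]
  have h1 : (2 * j + 1) % 2 = 1 := by omega
  have h2 : (2 * j + 1) / 2 = j := by omega
  rw [h1, h2, List.sum_cons]
  omega

lemma tm_zero : tm 0 = 0 := by simp [tm]
lemma tm_one : tm 1 = 1 := by have := tm_odd 0; simpa [tm_zero] using this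

lemma sum_range_two_mul {M : Type*} [AddCommMonoid M] (N : ℕ) (f : ℕ → M) :
    ∑ j ∈ Finset.range (2 * N), f j = ∑ m ∈ Finset.range N, (f (2 * m) + f (2 * m + 1)) := by
  induction N with
  | zero => simp
  | succ N ih =>
      have : 2 * (N + 1) = (2 * N + 1) + 1 := by ring
      rw [this, Finset.sum_range_succ, Finset.sum_range_succ, ih, Finset.sum_range_succ, add_assoc]

lemma mod_two_mul_add_one (x y : ℕ) (hy : 0 < y) :
    (2 * x + 1) % (2 * y) = 2 * (x % y) + 1 := by
  have hx := Nat.div_add_mod x y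
  conv_lhs => rw [show 2 * x + 1 = (2 * (x % y) + 1) + (2 * y) * (x / y) from by
    rw [mul_assoc]; omega]
  rw [Nat.add_mul_mod_self_left]
  exact Nat.mod_eq_of_lt (by have := Nat.mod_lt x hy; omega)

/-- Number of agreements of `t_n` with its cyclic shift by `i`. -/
def A (n i : ℕ) : ℕ := ∑ j ∈ Finset.range (2 ^ n), if tm j = tm ((i + j) % 2 ^ n) then 1 else 0

lemma A_zero (n : ℕ) : A n 0 = 2 ^ n := by
  unfold A
  rw [Finset.sum_congr rfl (fun j hj => ?_), Finset.sum_const, smul_eq_mul, mul_one,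
    Finset.card_range]
  rw [zero_add, Nat.mod_eq_of_lt (Finset.mem_range.mp hj), if_pos rfl]

lemma A_le (n i : ℕ) : A n i ≤ 2 ^ n := by
  unfold A
  calc _ ≤ ∑ _j ∈ Finset.range (2 ^ n), 1 := Finset.sum_le_sum (fun j _ => by split <;> omega)
  _ = 2 ^ n := by simp

lemma pow_succ_two (n : ℕ) : 2 ^ (n + 1) = 2 * 2 ^ n := by rw [pow_succ]; ring

lemma A_even (n k : ℕ) : A (n + 1) (2 * k) = 2 * A n k := by
  unfold A
  rw [pow_succ_two, sum_range_two_mul, Finset.mul_sum]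
  refine Finset.sum_congr rfl (fun m _ => ?_)
  have e1 : (2 * k + 2 * m) % (2 * 2 ^ n) = 2 * ((k + m) % 2 ^ n) := by
    rw [← Nat.mul_add, Nat.mul_mod_mul_left]
  have e2 : (2 * k + (2 * m + 1)) % (2 * 2 ^ n) = 2 * ((k + m) % 2 ^ n) + 1 := by
    rw [show 2 * k + (2 * m + 1) = 2 * (k + m) + 1 by ring,
      mod_two_mul_add_one _ _ (pow_pos (by norm_num : (0:ℕ) < 2) n)]
  rw [e1, e2, tm_even, tm_even, tm_odd, tm_odd]
  have h1 := tm_le m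
  have h2 := tm_le ((k + m) % 2 ^ n)
  split_ifs <;> omega

lemma A_odd (n k : ℕ) :
    A (n + 1) (2 * k + 1) + (A n k + A n ((k + 1) % 2 ^ n)) = 2 ^ (n + 1) := by
  unfold A
  rw [pow_succ_two, sum_range_two_mul, ← Finset.sum_add_distrib, ← Finset.sum_add_distrib]
  have hN : 0 < 2 ^ n := pow_pos (by norm_num : (0:ℕ) < 2) n
  have key : ∀ m, ((if tm (2 * m) = tm ((2 * k + 1 + 2 * m) % (2 * 2 ^ n)) then 1 else 0) +
      (if tm (2 * m + 1) = tm ((2 * k + 1 + (2 * m + 1)) % (2 * 2 ^ n)) then 1 else 0)) +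
      ((if tm m = tm ((k + m) % 2 ^ n) then 1 else 0) +
       (if tm m = tm (((k + 1) % 2 ^ n + m) % 2 ^ n) then 1 else 0)) = 2 := by
    intro m
    have e1 : (2 * k + 1 + 2 * m) % (2 * 2 ^ n) = 2 * ((k + m) % 2 ^ n) + 1 := by
      rw [show 2 * k + 1 + 2 * m = 2 * (k + m) + 1 by ring, mod_two_mul_add_one _ _ hN]
    have e2 : (2 * k + 1 + (2 * m + 1)) % (2 * 2 ^ n) = 2 * ((k + m + 1) % 2 ^ n) := by
      rw [show 2 * k + 1 + (2 * m + 1) = 2 * (k + m + 1) by ring, Nat.mul_mod_mul_left]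
    have e3 : ((k + 1) % 2 ^ n + m) % 2 ^ n = (k + m + 1) % 2 ^ n := by
      rw [Nat.mod_add_mod]; ring_nf
    simp only [e1, e2, e3, tm_even, tm_odd]
    have h1 := tm_le m
    have h2 := tm_le ((k + m) % 2 ^ n)
    have h3 := tm_le ((k + m + 1) % 2 ^ n)
    split_ifs <;> omega
  rw [Finset.sum_congr rfl (fun m _ => key m), Finset.sum_const, smul_eq_mul,
    Finset.card_range, Nat.mul_comm]

/-- The inductive invariant. -/
def P (n : ℕ) : Prop := ∀ i < 2 ^ n,
  (i = 0 → A n i = 2 ^ n) ∧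
  (i = 2 ^ (n - 1) → A n i = 0) ∧
  (i ≠ 0 → i ≠ 2 ^ (n - 1) → 2 ^ n ≤ 4 * A n i ∧ 4 * A n i ≤ 3 * 2 ^ n) ∧
  ((i = 1 ∨ i = 2 ^ n - 1) → i ≠ 2 ^ (n - 1) → 2 * A n i ≤ 2 ^ n) ∧
  ((i = 2 ^ (n - 1) - 1 ∨ i = 2 ^ (n - 1) + 1) → i ≠ 0 → i ≠ 2 ^ (n - 1) → 2 ^ n ≤ 2 * A n i)

lemma A_one_one : A 1 1 = 0 := by
  unfold A
  rw [show (2:ℕ)^1 = 2 by norm_num]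
  rw [Finset.sum_range_succ, Finset.sum_range_succ, Finset.sum_range_zero]
  norm_num [tm_zero, tm_one]

lemma inv : ∀ n, 1 ≤ n → P n := by
  intro n hn
  induction n with
  | zero => omega
  | succ n ih =>
    rcases Nat.eq_or_lt_of_le hn with h1 | h1
    · obtain rfl : n = 0 := by omega
      intro i hi
      interval_cases i
      · simp [A_zero]
      · simp [A_one_one]
    · have hn1 : 1 ≤ n := by omega
      have IH := ih hn1
      intro i hi
      have hNpos : 0 < 2 ^ n := pow_pos (by norm_num : (0:ℕ) < 2) n
      have hKN : 2 ^ n = 2 * 2 ^ (n - 1) := by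
        rw [← pow_succ_two]; congr 1; omega
      have hnn : n + 1 - 1 = n := by omega
      rw [hnn]
      rcases Nat.even_or_odd i with ⟨k, hk⟩ | ⟨k, hk⟩
      · have hk2 : i = 2 * k := by omega
        have hklt : k < 2 ^ n := by rw [pow_succ_two] at hi; omega
        have hrec : A (n + 1) i = 2 * A n k := by rw [hk2]; exact A_even n k
        have Hk := IH k hklt
        have := A_le n k
        rw [pow_succ_two]
        omega
      · have hk2 : i = 2 * k + 1 := by omega
        have hklt : k < 2 ^ n := by rw [pow_succ_two] at hi; omega
        have hrec := A_odd n k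
        rw [← hk2] at hrec
        have Hk := IH k hklt
        have ha := A_le n k
        have hb := A_le n ((k + 1) % 2 ^ n)
        have hA := A_le (n + 1) i
        rw [pow_succ_two] at hA ⊢
        rcases Nat.lt_or_ge (k + 1) (2 ^ n) with hk1 | hk1
        · rw [Nat.mod_eq_of_lt hk1] at hrec hb
          have Hk1 := IH (k + 1) hk1
          omega
        · have hke : k + 1 = 2 ^ n := by omega
          rw [hke, Nat.mod_self, A_zero] at hrec
          omega

/-! ### Relating `tWord` and `SD` to `tm` and `A` -/

lemma range_two_mul' (N : ℕ) :
    List.range (2 * N) = (List.range N).flatMap (fun j => [2 * j, 2 * j + 1]) := by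
  induction N with
  | zero => rfl
  | succ N ih =>
    rw [show 2 * (N + 1) = (2 * N + 1) + 1 by ring, List.range_succ, List.range_succ,
      List.range_succ, List.flatMap_append, ← ih]
    simp

lemma tWord_eq (n : ℕ) : tWord n = (List.range (2 ^ n)).map tm := by
  induction n with
  | zero =>
    show [0] = List.map tm (List.range 1)
    rw [List.range_succ]
    simp [tm_zero]
  | succ n ih =>
    have : tWord (n + 1) = mu (tWord n) := by
      unfold tWord; rw [Function.iterate_succ_apply']
    rw [this, ih, pow_succ_two, range_two_mul', mu, List.flatMap_map, List.map_flatMap]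
    congr 1
    funext j
    simp [Function.comp, tm_even, tm_odd]

lemma shifted_eq (n i : ℕ) (hi : i ≤ 2 ^ n) :
    ((tWord n ++ tWord n).drop i).take (2 ^ n) =
      (List.range (2 ^ n)).map (fun j => tm ((i + j) % 2 ^ n)) := by
  set N := 2 ^ n with hN
  have hNpos : 0 < N := pow_pos (by norm_num : (0:ℕ) < 2) n
  have hlen : (tWord n).length = N := by rw [tWord_eq]; simp [hN]
  apply List.ext_getElem
  · simp [hlen]; omega
  · intro j hj1 hj2
    have hjN : j < N := by simpa using hj2
    have hlt : i + j < (tWord n ++ tWord n).length := by simp [hlen]; omega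
    rw [List.getElem_take, List.getElem_drop]
    rw [List.getElem_map, List.getElem_range]
    rcases Nat.lt_or_ge (i + j) N with h | h
    · rw [List.getElem_append_left (by omega : i + j < (tWord n).length)]
      rw [Nat.mod_eq_of_lt h]
      simp only [tWord_eq, List.getElem_map, List.getElem_range]
    · rw [List.getElem_append_right (by omega : (tWord n).length ≤ i + j)]
      have : (i + j) % N = i + j - N := by
        rw [Nat.mod_eq_sub_mod (by omega), Nat.mod_eq_of_lt (by omega)]
      rw [this]
      simp only [tWord_eq, List.getElem_map, List.getElem_range]
      congr 1
      simp only [tWord_eq, List.length_map, List.length_range, hN]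

lemma SD_eq (n i : ℕ) (hi : i ≤ 2 ^ n) :
    SD (tWord n) (((tWord n ++ tWord n).drop i).take (2 ^ n)) = (A n i : ℝ) / (2 ^ n : ℝ) := by
  rw [SD, shifted_eq n i hi, tWord_eq]
  have hlen : ((List.range (2 ^ n)).map tm).length = 2 ^ n := by simp
  rw [hlen]
  congr 1
  · rw [List.zipWith_map]
    rw [List.zipWith_self]
    show ((List.range (2 ^ n)).map fun j => if tm j = tm ((i + j) % 2 ^ n) then (1:ℝ) else 0).sum = _
    rw [show ((List.range (2 ^ n)).map fun j => if tm j = tm ((i + j) % 2 ^ n) then (1:ℝ) else 0).sum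
        = ∑ j ∈ Finset.range (2 ^ n), (if tm j = tm ((i + j) % 2 ^ n) then (1:ℝ) else 0) from rfl]
    rw [A, Nat.cast_sum]
    refine Finset.sum_congr rfl (fun j _ => ?_)
    split <;> simp
  · simp

theorem technical_one_b (n i : ℕ) (h1 : 1 ≤ i) (h2 : i ≤ 2 ^ n - 1) :
    (i = 2 ^ (n - 1) →
      SD (tWord n) (((tWord n ++ tWord n).drop i).take (2 ^ n)) = 0) ∧
    (i ≠ 2 ^ (n - 1) →
      SD (tWord n) (((tWord n ++ tWord n).drop i).take (2 ^ n)) ∈ Set.Icc (1/4 : ℝ) (3/4)) := by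
  have hn : 1 ≤ n := by
    by_contra h
    obtain rfl : n = 0 := by omega
    simp at h2
    omega
  have hNpos : 0 < 2 ^ n := pow_pos (by norm_num : (0:ℕ) < 2) n
  have hilt : i < 2 ^ n := by omega
  have hile : i ≤ 2 ^ n := by omega
  obtain ⟨c1, c2, c3, c4, c5⟩ := inv n hn i hilt
  rw [SD_eq n i hile]
  have hNR : (0 : ℝ) < (2 ^ n : ℝ) := by positivity
  constructor
  · intro hsp
    rw [c2 hsp]
    simp
  · intro hsp
    obtain ⟨hl, hu⟩ := c3 (by omega) hsp
    have hlR : ((2 : ℝ) ^ n) ≤ 4 * (A n i : ℝ) := by exact_mod_cast hl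
    have huR : 4 * (A n i : ℝ) ≤ 3 * (2 : ℝ) ^ n := by exact_mod_cast hu
    constructor
    · rw [le_div_iff₀ hNR]
      push_cast at hlR ⊢
      linarith
    · rw [div_le_iff₀ hNR]
      push_cast at huR ⊢
      linarith
end
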